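/- arXiv:2307.03100 — 2 statements merged into one kernel-verified Lean document; each statement's English description precedes it below -/
import Mathlib

section
/- Let φ be a formal power series over ℚ with constant coefficient 1, let f := t/φ(t) (a formal power series with zero constant term and linear coefficient 1), and let g be the compositional inverse of f, i.e. the unique formal power series with zero constant term satisfying g(f(t)) = t. Then the identity (Σ_{n≥0} [t^n](φ(t)^n) · z^n) · g(z) = z · g'(z) holds in ℚ[[z]]; that is, the series whose n-th coefficient is the t^n-coefficient of the n-th power of φ equals z·g'(z)/g(z). -/
open PowerSeries

/-- Formal derivative of a power series. -/
noncomputable def D (f : PowerSeries ℚ) : PowerSeries ℚ :=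
  PowerSeries.mk fun n => ((n + 1 : ℕ) : ℚ) * PowerSeries.coeff (n + 1) f

/-- `comp f g` is the composition `g ∘ f`, i.e. the power series `g(f(t))`,
which is well defined (by this formula) when `f` has zero constant term. -/
noncomputable def comp (f g : PowerSeries ℚ) : PowerSeries ℚ :=
  PowerSeries.mk fun n =>
    ∑ k ∈ Finset.range (n + 1), PowerSeries.coeff k g * PowerSeries.coeff n (f ^ k)

private lemma D_eq (h : PowerSeries ℚ) : D h = PowerSeries.derivative ℚ h := by
  ext n
  rw [D, PowerSeries.coeff_mk, PowerSeries.coeff_derivative]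
  push_cast
  ring

/-- Swap lemma: coefficient of a product of a "composition-like" series with `h`. -/
private lemma swap_lemma (c : ℕ → ℚ) (F : ℕ → PowerSeries ℚ)
    (hF : ∀ k i, i < k → PowerSeries.coeff i (F k) = 0)
    (h : PowerSeries ℚ) (n : ℕ) :
    PowerSeries.coeff n
        ((PowerSeries.mk fun i => ∑ k ∈ Finset.range (i + 1),
            c k * PowerSeries.coeff i (F k)) * h)
      = ∑ k ∈ Finset.range (n + 1), c k * PowerSeries.coeff n (F k * h) := by
  rw [PowerSeries.coeff_mul, Finset.Nat.sum_antidiagonal_eq_sum_range_succ_mk]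
  simp only [PowerSeries.coeff_mk]
  calc
    ∑ i ∈ Finset.range (n + 1),
        (∑ k ∈ Finset.range (i + 1), c k * PowerSeries.coeff i (F k)) *
          PowerSeries.coeff (n - i) h
      = ∑ i ∈ Finset.range (n + 1), ∑ k ∈ Finset.range (n + 1),
          c k * PowerSeries.coeff i (F k) * PowerSeries.coeff (n - i) h := by
        refine Finset.sum_congr rfl fun i hi => ?_
        rw [Finset.sum_mul]
        refine Finset.sum_subset ?_ ?_
        · exact Finset.range_subset_range.2 (by
            have := Finset.mem_range.1 hi; omega)
        · intro k hk hk'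
          have hik : i < k := by
            have h1 := Finset.mem_range.1 hk
            have h2 : ¬ k < i + 1 := fun hc => hk' (Finset.mem_range.2 hc)
            omega
          rw [hF k i hik]
          ring
    _ = ∑ k ∈ Finset.range (n + 1), c k * ∑ i ∈ Finset.range (n + 1),
          PowerSeries.coeff i (F k) * PowerSeries.coeff (n - i) h := by
        rw [Finset.sum_comm]
        refine Finset.sum_congr rfl fun k _ => ?_
        rw [Finset.mul_sum]
        refine Finset.sum_congr rfl fun i _ => ?_
        ring
    _ = ∑ k ∈ Finset.range (n + 1), c k * PowerSeries.coeff n (F k * h) := by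
        refine Finset.sum_congr rfl fun k _ => ?_
        rw [PowerSeries.coeff_mul, Finset.Nat.sum_antidiagonal_eq_sum_range_succ_mk]

private lemma pow_mul_pow (φ f : PowerSeries ℚ) (hf : f * φ = PowerSeries.X)
    (k N : ℕ) (hkN : k ≤ N) :
    f ^ k * φ ^ N = PowerSeries.X ^ k * φ ^ (N - k) := by
  have h1 : φ ^ N = φ ^ k * φ ^ (N - k) := by
    rw [← pow_add]
    congr 1
    omega
  rw [h1, show f ^ k * (φ ^ k * φ ^ (N - k)) = (f * φ) ^ k * φ ^ (N - k) by ring, hf]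

private lemma coeff_D_pow (f : PowerSeries ℚ) (k i : ℕ) :
    ((i : ℚ) + 1) * PowerSeries.coeff (i + 1) (f ^ (k + 1))
      = ((k : ℚ) + 1) * PowerSeries.coeff i (f ^ k * D f) := by
  have h : PowerSeries.coeff i (PowerSeries.derivative ℚ (f ^ (k + 1)))
      = PowerSeries.coeff (i + 1) (f ^ (k + 1)) * ((i : ℚ) + 1) :=
    PowerSeries.coeff_derivative _ _
  rw [Derivation.leibniz_pow, Nat.add_sub_cancel, map_nsmul, nsmul_eq_mul,
    smul_eq_mul] at h
  rw [D_eq]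
  push_cast at h
  linear_combination -h

section Main

variable (φ f g : PowerSeries ℚ)

private lemma coeff_f_pow (hφ : PowerSeries.constantCoeff φ = 1)
    (hf : f * φ = PowerSeries.X) (k i : ℕ) (hik : i < k) :
    PowerSeries.coeff i (f ^ k) = 0 := by
  have hφ0 : PowerSeries.constantCoeff φ ≠ 0 := by rw [hφ]; exact one_ne_zero
  have hf' : f = PowerSeries.X * φ⁻¹ := by
    have := congrArg (· * φ⁻¹) hf
    simpa [mul_assoc, PowerSeries.mul_inv_cancel φ hφ0] using this
  rw [hf', mul_pow, PowerSeries.coeff_X_pow_mul']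
  rw [if_neg (by omega)]

private lemma coeff_f_pow_D (hφ : PowerSeries.constantCoeff φ = 1)
    (hf : f * φ = PowerSeries.X) (k i : ℕ) (hik : i < k) :
    PowerSeries.coeff i (f ^ k * D f) = 0 := by
  have hφ0 : PowerSeries.constantCoeff φ ≠ 0 := by rw [hφ]; exact one_ne_zero
  have hf' : f = PowerSeries.X * φ⁻¹ := by
    have := congrArg (· * φ⁻¹) hf
    simpa [mul_assoc, PowerSeries.mul_inv_cancel φ hφ0] using this
  rw [hf', mul_pow, mul_assoc, PowerSeries.coeff_X_pow_mul']
  rw [if_neg (by omega)]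

/-- Key residue-style computation: `coeff m (φ^(m+1) * D f) = δ_{m,0}`. -/
private lemma coeff_phi_pow_Df (hφ : PowerSeries.constantCoeff φ = 1)
    (hf : f * φ = PowerSeries.X) (m : ℕ) :
    PowerSeries.coeff m (φ ^ (m + 1) * D f) = if m = 0 then 1 else 0 := by
  have hf0 : PowerSeries.constantCoeff f = 0 := by
    have := congrArg (PowerSeries.constantCoeff) hf
    simpa [hφ] using this
  have hDfφ : φ * D f = 1 - f * D φ := by
    have h : PowerSeries.derivative ℚ (f * φ)
        = PowerSeries.derivative ℚ (PowerSeries.X : PowerSeries ℚ) := by rw [hf]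
    rw [Derivation.leibniz, PowerSeries.derivative_X, smul_eq_mul, smul_eq_mul] at h
    rw [D_eq, D_eq]
    linear_combination h
  cases m with
  | zero =>
    simp only [zero_add, pow_one, if_pos rfl]
    rw [hDfφ, map_sub]
    have h0 : PowerSeries.coeff 0 (f * D φ) = 0 := by
      rw [PowerSeries.coeff_zero_eq_constantCoeff_apply, map_mul, hf0, zero_mul]
    rw [h0]
    simp
  | succ m' =>
    rw [if_neg (Nat.succ_ne_zero m')]
    have h5 := pow_mul_pow φ f hf 1 (m' + 1) (by omega)
    rw [Nat.add_sub_cancel] at h5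
    have key : φ ^ (m' + 2) * D f = φ ^ (m' + 1) - PowerSeries.X * (φ ^ m' * D φ) := by
      calc φ ^ (m' + 2) * D f = φ ^ (m' + 1) * (φ * D f) := by ring
        _ = φ ^ (m' + 1) * (1 - f * D φ) := by rw [hDfφ]
        _ = φ ^ (m' + 1) - (f ^ 1 * φ ^ (m' + 1)) * D φ := by ring
        _ = φ ^ (m' + 1) - PowerSeries.X * (φ ^ m' * D φ) := by
            rw [h5]; ring
    rw [show m' + 1 + 1 = m' + 2 by rfl] at key
    rw [key, map_sub, PowerSeries.coeff_succ_X_mul]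
    have hD : PowerSeries.coeff m' (φ ^ m' * D φ)
        = PowerSeries.coeff (m' + 1) (φ ^ (m' + 1)) := by
      have h := coeff_D_pow φ m' m'
      have hne : ((m' : ℚ) + 1) ≠ 0 := by positivity
      field_simp at h
      linarith [h]
    rw [hD]
    ring

private lemma lemma_A (hφ : PowerSeries.constantCoeff φ = 1)
    (hf : f * φ = PowerSeries.X)
    (hgf : comp f g = PowerSeries.X) (n : ℕ) :
    PowerSeries.coeff n (PowerSeries.X * φ ^ n)
      = ∑ k ∈ Finset.range (n + 1),
          PowerSeries.coeff k g * PowerSeries.coeff (n - k) (φ ^ (n - k)) := by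
  have h1 : PowerSeries.coeff n ((comp f g) * φ ^ n)
      = ∑ k ∈ Finset.range (n + 1),
          PowerSeries.coeff k g * PowerSeries.coeff n (f ^ k * φ ^ n) :=
    swap_lemma (fun k => PowerSeries.coeff k g) (fun k => f ^ k)
      (fun k i hik => coeff_f_pow φ f hφ hf k i hik) (φ ^ n) n
  rw [hgf] at h1
  rw [h1]
  refine Finset.sum_congr rfl fun k hk => ?_
  have hkn : k ≤ n := by have := Finset.mem_range.1 hk; omega
  rw [pow_mul_pow φ f hf k n hkn, PowerSeries.coeff_X_pow_mul', if_pos hkn]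

private lemma lemma_B (hφ : PowerSeries.constantCoeff φ = 1)
    (hf : f * φ = PowerSeries.X)
    (hg0 : PowerSeries.constantCoeff g = 0)
    (hgf : comp f g = PowerSeries.X) (n : ℕ) :
    PowerSeries.coeff n (φ ^ (n + 1))
      = ((n : ℚ) + 1) * PowerSeries.coeff (n + 1) g := by
  -- rewrite D (comp f g) in "composition-like" form
  have hD : D (comp f g) = PowerSeries.mk fun i => ∑ k ∈ Finset.range (i + 1),
      (((k : ℚ) + 1) * PowerSeries.coeff (k + 1) g) *
        PowerSeries.coeff i (f ^ k * D f) := by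
    ext i
    rw [D, PowerSeries.coeff_mk, PowerSeries.coeff_mk, comp, PowerSeries.coeff_mk]
    rw [Finset.mul_sum, Finset.sum_range_succ']
    have hg00 : PowerSeries.coeff 0 g = 0 := by
      rw [PowerSeries.coeff_zero_eq_constantCoeff]; exact hg0
    rw [hg00]
    simp only [zero_mul, mul_zero, add_zero]
    refine Finset.sum_congr rfl fun k _ => ?_
    have := coeff_D_pow f k i
    push_cast
    calc ((i : ℚ) + 1) * (PowerSeries.coeff (k + 1) g * PowerSeries.coeff (i + 1) (f ^ (k + 1)))
        = PowerSeries.coeff (k + 1) g *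
            (((i : ℚ) + 1) * PowerSeries.coeff (i + 1) (f ^ (k + 1))) := by ring
      _ = PowerSeries.coeff (k + 1) g *
            (((k : ℚ) + 1) * PowerSeries.coeff i (f ^ k * D f)) := by rw [this]
      _ = ((k : ℚ) + 1) * PowerSeries.coeff (k + 1) g * PowerSeries.coeff i (f ^ k * D f) := by
            ring
  have hDX : D (PowerSeries.X : PowerSeries ℚ) = 1 := by
    rw [D_eq]; exact PowerSeries.derivative_X
  have h1 : PowerSeries.coeff n (φ ^ (n + 1))
      = PowerSeries.coeff n (D (comp f g) * φ ^ (n + 1)) := by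
    rw [hgf, hDX, one_mul]
  rw [h1, hD, swap_lemma _ _ (fun k i hik => coeff_f_pow_D φ f hφ hf k i hik)]
  have h2 : ∀ k ∈ Finset.range (n + 1),
      (((k : ℚ) + 1) * PowerSeries.coeff (k + 1) g) *
          PowerSeries.coeff n (f ^ k * D f * φ ^ (n + 1))
        = if k = n then ((n : ℚ) + 1) * PowerSeries.coeff (n + 1) g else 0 := by
    intro k hk
    have hkn : k ≤ n := by have := Finset.mem_range.1 hk; omega
    have h3 : f ^ k * D f * φ ^ (n + 1) = PowerSeries.X ^ k * (φ ^ (n + 1 - k) * D f) := by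
      rw [show f ^ k * D f * φ ^ (n + 1) = (f ^ k * φ ^ (n + 1)) * D f by ring,
        pow_mul_pow φ f hf k (n + 1) (by omega)]
      ring
    have h4 : n + 1 - k = (n - k) + 1 := by omega
    rw [h3, PowerSeries.coeff_X_pow_mul', if_pos hkn, h4,
      coeff_phi_pow_Df φ f hφ hf (n - k)]
    by_cases hkn' : k = n
    · subst hkn'
      rw [if_pos (by omega), if_pos rfl]
      ring
    · rw [if_neg (by omega), if_neg hkn']
      ring
  rw [Finset.sum_congr rfl h2, Finset.sum_ite_eq' (Finset.range (n + 1)) n,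
    if_pos (Finset.self_mem_range_succ n)]

end Main

/-- Lagrange-inversion-type lemma: if `φ` has constant coefficient `1`,
`f = t/φ(t)` (i.e. `f * φ = X`), and `g` is the compositional inverse of `f`
(zero constant term and `g(f(t)) = t`), then
`(Σ_n [t^n](φ^n) z^n) · g(z) = z · g'(z)`. -/
theorem coeff_pow_generating_eq_log_deriv_of_inverse
    (φ f g : PowerSeries ℚ)
    (hφ : PowerSeries.constantCoeff φ = 1)
    (hf : f * φ = PowerSeries.X)
    (hg0 : PowerSeries.constantCoeff g = 0)
    (hgf : comp f g = PowerSeries.X) :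
    (PowerSeries.mk fun n => PowerSeries.coeff n (φ ^ n)) * g
      = PowerSeries.X * D g := by
  ext n
  rw [PowerSeries.coeff_mul, Finset.Nat.sum_antidiagonal_eq_sum_range_succ_mk]
  simp only [PowerSeries.coeff_mk]
  have hflip : ∑ i ∈ Finset.range (n + 1),
      PowerSeries.coeff i (φ ^ i) * PowerSeries.coeff (n - i) g
    = ∑ k ∈ Finset.range (n + 1),
      PowerSeries.coeff k g * PowerSeries.coeff (n - k) (φ ^ (n - k)) := by
    rw [← Finset.sum_range_reflect]
    refine Finset.sum_congr rfl fun j hj => ?_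
    have hjn : j ≤ n := by have := Finset.mem_range.1 hj; omega
    rw [show n + 1 - 1 - j = n - j by omega, Nat.sub_sub_self hjn]
    ring
  rw [hflip, ← lemma_A φ f g hφ hf hgf n]
  cases n with
  | zero =>
    simp [PowerSeries.coeff_mul, Finset.Nat.antidiagonal_zero]
  | succ m =>
    rw [PowerSeries.coeff_succ_X_mul, PowerSeries.coeff_succ_X_mul,
      lemma_B φ f g hφ hf hg0 hgf m, D, PowerSeries.coeff_mk]
    push_cast
    ring
end

section
/- For every even n ≥ 2, the closed form of the Berger-sphere eta coefficient equals Habel's conjectured expression: (2/n!)·B_n^{(n)}(n/2) = −(2/(n−1)!)·Σ_{l=0}^{n−1} (B_{l+1}(n/2 − 1)/(l+1)!) · Φ^{(l)}(1 − n/2), where Φ(x) = ∏_{i=0}^{n−2}(x+i) and B_m are the ordinary Bernoulli polynomials. -/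
open PowerSeries

/-- `Φ(x) = ∏_{i=0}^{n−2} (x + i)`, a monic polynomial of degree `n − 1`. -/
noncomputable def Phi (n : ℕ) : Polynomial ℚ :=
  ∏ i ∈ Finset.range (n - 1), (Polynomial.X + Polynomial.C (i : ℚ))

namespace HabelAux

open Finset

lemma res_core (w : ℚ⟦X⟧) (hw : constantCoeff (R := ℚ) w ≠ 0) (r : ℕ) :
    coeff (R := ℚ) (r + 1) ((w + X * d⁄dX ℚ w) * w⁻¹ ^ (r + 2)) = 0 := by
  have hwv : w * w⁻¹ = 1 := PowerSeries.mul_inv_cancel w hw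
  have h1 : (w + X * d⁄dX ℚ w) * w⁻¹ ^ (r + 2)
      = w⁻¹ ^ (r + 1) + X * (d⁄dX ℚ w * w⁻¹ ^ (r + 2)) := by
    linear_combination (w⁻¹ ^ (r + 1)) * hwv
  have hdinv : d⁄dX ℚ (w⁻¹) = -w⁻¹ ^ 2 * d⁄dX ℚ w := derivative_inv' w
  have h2 : d⁄dX ℚ (w⁻¹ ^ (r + 1)) = (r + 1) • (-(d⁄dX ℚ w * w⁻¹ ^ (r + 2))) := by
    rw [Derivation.leibniz_pow, hdinv]
    congr 1
    rw [Nat.add_sub_cancel, smul_eq_mul]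
    ring
  have h3 := congrArg (coeff (R := ℚ) r) h2
  rw [PowerSeries.coeff_derivative, map_nsmul, nsmul_eq_mul, map_neg] at h3
  push_cast at h3
  have hr : ((r : ℚ) + 1) ≠ 0 := by positivity
  have h4 : coeff (R := ℚ) r (d⁄dX ℚ w * w⁻¹ ^ (r + 2)) = -coeff (R := ℚ) (r + 1) (w⁻¹ ^ (r + 1)) := by
    apply mul_left_cancel₀ hr
    linear_combination h3
  rw [h1, map_add, coeff_succ_X_mul, h4, add_neg_cancel]

lemma res_delta (w : ℚ⟦X⟧) (hw : constantCoeff (R := ℚ) w = 1) (N i : ℕ) (hN : 1 ≤ N) :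
    coeff (R := ℚ) (N - 1) ((X * w) ^ i * (w + X * d⁄dX ℚ w) * w⁻¹ ^ N)
      = if i = N - 1 then 1 else 0 := by
  have hw0 : constantCoeff (R := ℚ) w ≠ 0 := by rw [hw]; norm_num
  have hwv : w * w⁻¹ = 1 := PowerSeries.mul_inv_cancel w hw0
  have hre : (X * w) ^ i * (w + X * d⁄dX ℚ w) * w⁻¹ ^ N
      = X ^ i * (w ^ i * (w + X * d⁄dX ℚ w) * w⁻¹ ^ N) := by ring
  rw [hre, PowerSeries.coeff_X_pow_mul']
  by_cases hi : i ≤ N - 1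
  · rw [if_pos hi]
    obtain ⟨s, rfl⟩ : ∃ s, N = i + s + 1 := ⟨N - i - 1, by omega⟩
    have hsub : i + s + 1 - 1 - i = s := by omega
    rw [hsub]
    have hpow : w ^ i * (w + X * d⁄dX ℚ w) * w⁻¹ ^ (i + s + 1)
        = (w + X * d⁄dX ℚ w) * w⁻¹ ^ (s + 1) := by
      have : w ^ i * w⁻¹ ^ (i + s + 1) = w⁻¹ ^ (s + 1) := by
        calc w ^ i * w⁻¹ ^ (i + s + 1) = (w * w⁻¹) ^ i * w⁻¹ ^ (s + 1) := by
              rw [mul_pow, pow_add]; ring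
          _ = w⁻¹ ^ (s + 1) := by rw [hwv, one_pow, one_mul]
      calc w ^ i * (w + X * d⁄dX ℚ w) * w⁻¹ ^ (i + s + 1)
          = (w + X * d⁄dX ℚ w) * (w ^ i * w⁻¹ ^ (i + s + 1)) := by ring
        _ = (w + X * d⁄dX ℚ w) * w⁻¹ ^ (s + 1) := by rw [this]
    rw [hpow]
    rcases Nat.eq_zero_or_pos s with hs | hs
    · subst hs
      rw [if_pos (by omega)]
      have h0 : coeff (R := ℚ) 0 ((w + X * d⁄dX ℚ w) * w⁻¹ ^ (0 + 1)) =
          constantCoeff (R := ℚ) ((w + X * d⁄dX ℚ w) * w⁻¹ ^ 1) := by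
        rw [coeff_zero_eq_constantCoeff]
      rw [h0, map_mul, map_add, map_mul, constantCoeff_X, zero_mul, add_zero, hw, pow_one,
        PowerSeries.constantCoeff_inv, hw, inv_one, mul_one]
    · obtain ⟨r, rfl⟩ : ∃ r, s = r + 1 := ⟨s - 1, by omega⟩
      rw [if_neg (by omega)]
      exact res_core w hw0 r
  · rw [if_neg hi, if_neg (by omega)]

lemma eval_iter_deriv (P : Polynomial ℚ) (N : ℕ) (hP : P.natDegree < N) (l : ℕ) (a : ℚ) :
    Polynomial.eval a (Polynomial.derivative^[l] P) =
      ∑ m ∈ Finset.range N, P.coeff m * (m.descFactorial l : ℚ) * a ^ (m - l) := by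
  conv_lhs => rw [P.as_sum_range' N hP]
  rw [Polynomial.iterate_derivative_sum, Polynomial.eval_finset_sum]
  refine Finset.sum_congr rfl fun m _ => ?_
  rw [← Polynomial.smul_X_eq_monomial, Polynomial.iterate_derivative_smul,
    Polynomial.iterate_derivative_X_pow_eq_smul]
  simp [mul_assoc, mul_comm, mul_left_comm]

noncomputable def E : ℚ⟦X⟧ := rescale (-1 : ℚ) (exp ℚ)

lemma coeff_E (k : ℕ) : coeff (R := ℚ) k E = (-1) ^ k / k.factorial := by
  rw [E, coeff_rescale, coeff_exp]
  simp [Algebra.algebraMap_self, div_eq_mul_inv]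

lemma E_pow (k : ℕ) : E ^ k = rescale (-(k : ℚ)) (exp ℚ) := by
  rw [E, ← map_pow, exp_pow_eq_rescale_exp, rescale_rescale]
  norm_num

lemma coeff_E_pow (p k : ℕ) : coeff (R := ℚ) k (E ^ p) = (-(p : ℚ)) ^ k / k.factorial := by
  rw [E_pow, coeff_rescale, coeff_exp]
  simp [Algebra.algebraMap_self, div_eq_mul_inv]

lemma rescale_exp_zero : rescale (0 : ℚ) (exp ℚ) = 1 := by
  rw [rescale_zero]
  simp

lemma E_mul_exp : E * exp ℚ = 1 := by
  have := exp_mul_exp_eq_exp_add (-1 : ℚ) 1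
  rw [← E, rescale_one] at this
  simpa [rescale_exp_zero] using this

lemma derivative_E : d⁄dX ℚ E = -E := by
  ext k
  rw [PowerSeries.coeff_derivative, map_neg, coeff_E, coeff_E]
  rw [Nat.factorial_succ, pow_succ]
  have h1 : (k.factorial : ℚ) ≠ 0 := Nat.cast_ne_zero.mpr k.factorial_ne_zero
  have h2 : ((k : ℚ) + 1) ≠ 0 := by positivity
  field_simp
  push_cast
  ring

noncomputable def W : ℚ⟦X⟧ := PowerSeries.mk fun k => coeff (R := ℚ) (k + 1) (1 - E)

lemma X_mul_W : X * W = 1 - E := by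
  ext k
  cases k with
  | zero =>
      rw [coeff_zero_eq_constantCoeff, map_mul, constantCoeff_X, zero_mul, map_sub, map_one]
      have : constantCoeff (R := ℚ) E = 1 := by
        have := coeff_E 0
        rw [coeff_zero_eq_constantCoeff] at this
        simp at this
        exact this
      rw [this, sub_self]
  | succ k => rw [coeff_succ_X_mul, W, coeff_mk]

lemma constCoeff_W : constantCoeff (R := ℚ) W = 1 := by
  rw [← coeff_zero_eq_constantCoeff, W, coeff_mk, map_sub, coeff_E]
  simp [Nat.factorial]

lemma constCoeff_W' : constantCoeff (R := ℚ) W ≠ 0 := by rw [constCoeff_W]; norm_num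

lemma W_inv : W * W⁻¹ = 1 := PowerSeries.mul_inv_cancel W constCoeff_W'

lemma constCoeff_Winv : constantCoeff (R := ℚ) W⁻¹ = 1 := by
  rw [PowerSeries.constantCoeff_inv, constCoeff_W, inv_one]

lemma W_add_X_dW : W + X * d⁄dX ℚ W = E := by
  have h1 : d⁄dX ℚ (X * W) = W + X * d⁄dX ℚ W := by
    rw [Derivation.leibniz, derivative_X]
    rw [smul_eq_mul, smul_eq_mul, mul_one]
    ring
  have h2 : d⁄dX ℚ (X * W) = E := by
    rw [X_mul_W, map_sub, derivative_E, Derivation.map_one_eq_zero]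
    simp
  rw [← h1, h2]

lemma neg_one_pow_pred (n : ℕ) (hn2 : 2 ≤ n) (hne : Even n) :
    (-1 : ℚ) ^ (n - 1) = -1 := by
  have hodd : Odd (n - 1) := Nat.Even.sub_odd (by omega) hne odd_one
  exact Odd.neg_one_pow hodd

lemma coeff_ep_mul_A (n p : ℕ) (hn2 : 2 ≤ n) (hne : Even n) :
    coeff (R := ℚ) (n - 1) (E ^ p * (E * W⁻¹ ^ n)) = -(p.choose (n - 1) : ℚ) := by
  have hE1 : E = 1 - X * W := by rw [X_mul_W]; ring
  have hA : E * W⁻¹ ^ n = (W + X * d⁄dX ℚ W) * W⁻¹ ^ n := by rw [W_add_X_dW]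
  have hEp : E ^ p
      = ∑ k ∈ range (p + 1), (-(X * W)) ^ k * 1 ^ (p - k) * (p.choose k : ℚ⟦X⟧) := by
    rw [hE1, show (1 : ℚ⟦X⟧) - X * W = -(X * W) + 1 by ring, add_pow]
  rw [hEp, hA, Finset.sum_mul]
  rw [map_sum]
  have hterm : ∀ k ∈ range (p + 1),
      coeff (R := ℚ) (n - 1) ((-(X * W)) ^ k * 1 ^ (p - k) * (p.choose k : ℚ⟦X⟧) *
        ((W + X * d⁄dX ℚ W) * W⁻¹ ^ n))
      = if k = n - 1 then (-1 : ℚ) ^ k * (p.choose k : ℚ) else 0 := by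
    intro k _
    have : (-(X * W)) ^ k * 1 ^ (p - k) * (p.choose k : ℚ⟦X⟧) *
        ((W + X * d⁄dX ℚ W) * W⁻¹ ^ n)
        = ((-1 : ℚ) ^ k * (p.choose k : ℚ)) • ((X * W) ^ k * (W + X * d⁄dX ℚ W) * W⁻¹ ^ n) := by
      rw [smul_eq_C_mul, neg_pow]
      simp only [map_mul, map_pow, map_natCast, map_neg, map_one]
      ring
    rw [this, map_smul, res_delta W constCoeff_W n k (by omega), smul_eq_mul]
    by_cases hk : k = n - 1
    · rw [if_pos hk, if_pos hk, mul_one]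
    · rw [if_neg hk, if_neg hk, mul_zero]
  rw [Finset.sum_congr rfl hterm, Finset.sum_ite_eq' (range (p + 1)) (n - 1)
    (fun k => (-1 : ℚ) ^ k * (p.choose k : ℚ))]
  by_cases hp : n - 1 ∈ range (p + 1)
  · rw [if_pos hp, neg_one_pow_pred n hn2 hne]; ring
  · rw [if_neg hp, Nat.choose_eq_zero_of_lt (by simp at hp; omega)]
    norm_num

noncomputable def Psi (n : ℕ) : Polynomial ℚ :=
  ∑ j ∈ range n, Polynomial.monomial j
    (((n - 1).factorial : ℚ) * coeff (R := ℚ) (n - 1 - j) (E * W⁻¹ ^ n) / j.factorial)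

lemma Psi_coeff (n j : ℕ) (hj : j < n) :
    (Psi n).coeff j
      = ((n - 1).factorial : ℚ) * coeff (R := ℚ) (n - 1 - j) (E * W⁻¹ ^ n) / j.factorial := by
  rw [Psi, Polynomial.finset_sum_coeff]
  simp only [Polynomial.coeff_monomial]
  rw [Finset.sum_ite_eq' (range n) j]
  rw [if_pos (mem_range.mpr hj)]

lemma Psi_eval (n p : ℕ) (hn2 : 2 ≤ n) (hne : Even n) :
    (Psi n).eval (-(p : ℚ)) = -(((n - 1).factorial : ℚ) * (p.choose (n - 1) : ℚ)) := by
  have hc : coeff (R := ℚ) (n - 1) (E ^ p * (E * W⁻¹ ^ n))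
      = ∑ i ∈ range ((n - 1) + 1), coeff (R := ℚ) i (E ^ p) * coeff (R := ℚ) ((n - 1) - i) (E * W⁻¹ ^ n) := by
    rw [PowerSeries.coeff_mul, Finset.Nat.sum_antidiagonal_eq_sum_range_succ_mk]
  rw [show (n - 1) + 1 = n by omega] at hc
  rw [Psi, Polynomial.eval_finset_sum]
  simp only [Polynomial.eval_monomial]
  calc ∑ j ∈ range n,
        ((n - 1).factorial : ℚ) * coeff (R := ℚ) (n - 1 - j) (E * W⁻¹ ^ n) / j.factorial * (-(p : ℚ)) ^ j
      = ((n - 1).factorial : ℚ)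
          * ∑ j ∈ range n, coeff (R := ℚ) j (E ^ p) * coeff (R := ℚ) ((n - 1) - j) (E * W⁻¹ ^ n) := by
        rw [Finset.mul_sum]
        refine Finset.sum_congr rfl fun j _ => ?_
        rw [coeff_E_pow]
        ring
    _ = ((n - 1).factorial : ℚ) * coeff (R := ℚ) (n - 1) (E ^ p * (E * W⁻¹ ^ n)) := by rw [hc]
    _ = -(((n - 1).factorial : ℚ) * (p.choose (n - 1) : ℚ)) := by
        rw [coeff_ep_mul_A n p hn2 hne]; ring

lemma Phi_eval_neg (n p : ℕ) (hn2 : 2 ≤ n) (hne : Even n) :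
    (Phi n).eval (-(p : ℚ)) = -(((n - 1).factorial : ℚ) * (p.choose (n - 1) : ℚ)) := by
  rw [Phi, Polynomial.eval_prod]
  simp only [Polynomial.eval_add, Polynomial.eval_X, Polynomial.eval_C]
  by_cases hp : p < n - 1
  · rw [Finset.prod_eq_zero (Finset.mem_range.mpr hp) (by norm_num : (-(p : ℚ) + (p : ℚ) = 0))]
    rw [Nat.choose_eq_zero_of_lt hp]
    norm_num
  · push_neg at hp
    have h1 : ∀ i ∈ range (n - 1), (-(p : ℚ) + (i : ℚ)) = -1 * ((p : ℚ) - (i : ℚ)) :=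
      fun i _ => by ring
    rw [Finset.prod_congr rfl h1, Finset.prod_mul_distrib, Finset.prod_const]
    have h2 : ∏ i ∈ range (n - 1), ((p : ℚ) - (i : ℚ)) = (p.descFactorial (n - 1) : ℚ) := by
      rw [Nat.descFactorial_eq_prod_range, Nat.cast_prod]
      refine Finset.prod_congr rfl fun i hi => ?_
      have : i ≤ p := by have := mem_range.mp hi; omega
      rw [Nat.cast_sub this]
    rw [h2, Finset.card_range, neg_one_pow_pred n hn2 hne,
      Nat.descFactorial_eq_factorial_mul_choose]
    push_cast
    ring

lemma Psi_eq_Phi (n : ℕ) (hn2 : 2 ≤ n) (hne : Even n) : Psi n = Phi n := by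
  have hzero : Psi n - Phi n = 0 := by
    apply Polynomial.eq_zero_of_infinite_isRoot
    apply Set.infinite_of_injective_forall_mem (f := fun p : ℕ => -(p : ℚ))
    · intro a b hab
      simp only [neg_inj, Nat.cast_inj] at hab
      exact hab
    · intro p
      simp only [Set.mem_setOf_eq, Polynomial.IsRoot, Polynomial.eval_sub]
      rw [Psi_eval n p hn2 hne, Phi_eval_neg n p hn2 hne, sub_self]
  exact sub_eq_zero.mp hzero

lemma fact1 (n : ℕ) (hn2 : 2 ≤ n) (hne : Even n) (j : ℕ) (hj : j < n) :
    (Phi n).coeff j * (j.factorial : ℚ)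
      = ((n - 1).factorial : ℚ) * coeff (R := ℚ) (n - 1 - j) (E * W⁻¹ ^ n) := by
  rw [← Psi_eq_Phi n hn2 hne, Psi_coeff n j hj]
  have : (j.factorial : ℚ) ≠ 0 := Nat.cast_ne_zero.mpr j.factorial_ne_zero
  field_simp

lemma exp_sub_one_ne : (exp ℚ - 1 : ℚ⟦X⟧) ≠ 0 := by
  intro h
  have := congrArg (coeff (R := ℚ) 1) h
  rw [map_sub, coeff_exp] at this
  simp [Algebra.algebraMap_self] at this

lemma exp_mul_XW : exp ℚ * (X * W) = exp ℚ - 1 := by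
  rw [X_mul_W, mul_sub, mul_one, mul_comm (exp ℚ) E, E_mul_exp]

lemma B_eq (B : ℚ⟦X⟧) (hB : B * (exp ℚ - 1) = X) : B = E * W⁻¹ := by
  apply mul_right_cancel₀ exp_sub_one_ne
  rw [hB]
  calc (X : ℚ⟦X⟧) = (E * exp ℚ) * (W * W⁻¹) * X := by rw [E_mul_exp, W_inv]; ring
    _ = E * W⁻¹ * (exp ℚ * (X * W)) := by ring
    _ = E * W⁻¹ * (exp ℚ - 1) := by rw [exp_mul_XW]

lemma bern_mk (y : ℚ) :
    (PowerSeries.mk fun k => Polynomial.eval y (Polynomial.bernoulli k) / k.factorial)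
      = E * W⁻¹ * rescale y (exp ℚ) := by
  apply mul_right_cancel₀ exp_sub_one_ne
  have hg := Polynomial.bernoulli_generating_function y
  have hmk : (PowerSeries.mk fun n =>
        Polynomial.aeval y ((1 / (n.factorial : ℚ)) • Polynomial.bernoulli n))
      = PowerSeries.mk (fun k => Polynomial.eval y (Polynomial.bernoulli k) / k.factorial) := by
    ext k
    simp [Polynomial.aeval_def, Polynomial.eval₂_smul, Polynomial.eval₂_eq_eval_map,
      div_eq_mul_inv, mul_comm]
  rw [hmk] at hg
  rw [hg]
  calc (X : ℚ⟦X⟧) * rescale y (exp ℚ)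
      = (E * exp ℚ) * (W * W⁻¹) * (X * rescale y (exp ℚ)) := by rw [E_mul_exp, W_inv]; ring
    _ = E * W⁻¹ * rescale y (exp ℚ) * (exp ℚ * (X * W)) := by ring
    _ = E * W⁻¹ * rescale y (exp ℚ) * (exp ℚ - 1) := by rw [exp_mul_XW]

lemma coeff_rescale_exp (c : ℚ) (k : ℕ) :
    coeff (R := ℚ) k (rescale c (exp ℚ)) = c ^ k / k.factorial := by
  rw [coeff_rescale, coeff_exp]
  simp [Algebra.algebraMap_self, div_eq_mul_inv]

lemma step2_inner (F Ga : ℚ⟦X⟧) (hF0 : coeff (R := ℚ) 0 F = 1) (a : ℚ)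
    (hGa : Ga = rescale a (exp ℚ)) (n m : ℕ) (hm : m < n) :
    ∑ l ∈ range n, (m.descFactorial l : ℚ) * a ^ (m - l) * coeff (R := ℚ) (l + 1) F
      = (m.factorial : ℚ) * coeff (R := ℚ) (m + 1) (F * Ga - Ga) := by
  have htrunc : ∑ l ∈ range n, (m.descFactorial l : ℚ) * a ^ (m - l) * coeff (R := ℚ) (l + 1) F
      = ∑ l ∈ range (m + 1), (m.descFactorial l : ℚ) * a ^ (m - l) * coeff (R := ℚ) (l + 1) F := by
    symm
    apply Finset.sum_subset (Finset.range_subset_range.mpr (by omega))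
    intro l _ hl
    rw [Nat.descFactorial_eq_zero_iff_lt.mpr (by simp at hl; omega)]
    norm_num
  have hcm : coeff (R := ℚ) (m + 1) (F * Ga)
      = ∑ i ∈ range (m + 2), coeff (R := ℚ) i F * coeff (R := ℚ) (m + 1 - i) Ga := by
    rw [PowerSeries.coeff_mul, Finset.Nat.sum_antidiagonal_eq_sum_range_succ_mk]
  have hpeel : ∑ i ∈ range (m + 2), coeff (R := ℚ) i F * coeff (R := ℚ) (m + 1 - i) Ga
      = (∑ l ∈ range (m + 1), coeff (R := ℚ) (l + 1) F * (a ^ (m - l) / (m - l).factorial))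
        + a ^ (m + 1) / (m + 1).factorial := by
    rw [Finset.sum_range_succ']
    congr 1
    · refine Finset.sum_congr rfl fun l _ => ?_
      rw [Nat.succ_sub_succ, hGa, coeff_rescale_exp]
    · rw [hF0, Nat.sub_zero, hGa, coeff_rescale_exp, one_mul]
  rw [htrunc, map_sub, hcm, hpeel, hGa, coeff_rescale_exp]
  rw [add_sub_cancel_right, Finset.mul_sum]
  refine Finset.sum_congr rfl fun l hl => ?_
  have hlm : l ≤ m := by simp at hl; omega
  have hfac : ((m - l).factorial : ℚ) * (m.descFactorial l : ℚ) = (m.factorial : ℚ) := by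
    rw [← Nat.cast_mul, Nat.factorial_mul_descFactorial hlm]
  have h1 : ((m - l).factorial : ℚ) ≠ 0 := Nat.cast_ne_zero.mpr (Nat.factorial_ne_zero _)
  field_simp
  linear_combination a ^ (m - l) * coeff (R := ℚ) (l + 1) F * hfac

lemma step2 (n : ℕ) (P : Polynomial ℚ) (hdeg : P.natDegree < n)
    (F Ga : ℚ⟦X⟧) (hF0 : coeff (R := ℚ) 0 F = 1) (a : ℚ) (hGa : Ga = rescale a (exp ℚ)) :
    ∑ l ∈ range n, coeff (R := ℚ) (l + 1) F * Polynomial.eval a (Polynomial.derivative^[l] P)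
      = ∑ m ∈ range n, P.coeff m * (m.factorial : ℚ) * coeff (R := ℚ) (m + 1) (F * Ga - Ga) := by
  calc ∑ l ∈ range n, coeff (R := ℚ) (l + 1) F * Polynomial.eval a (Polynomial.derivative^[l] P)
      = ∑ l ∈ range n, ∑ m ∈ range n,
          coeff (R := ℚ) (l + 1) F * (P.coeff m * (m.descFactorial l : ℚ) * a ^ (m - l)) := by
        refine Finset.sum_congr rfl fun l _ => ?_
        rw [eval_iter_deriv P n hdeg l a, Finset.mul_sum]
    _ = ∑ m ∈ range n, ∑ l ∈ range n,
          coeff (R := ℚ) (l + 1) F * (P.coeff m * (m.descFactorial l : ℚ) * a ^ (m - l)) :=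
        Finset.sum_comm
    _ = ∑ m ∈ range n, P.coeff m * ((m.factorial : ℚ) * coeff (R := ℚ) (m + 1) (F * Ga - Ga)) := by
        refine Finset.sum_congr rfl fun m hm => ?_
        rw [← step2_inner F Ga hF0 a hGa n m (mem_range.mp hm), Finset.mul_sum]
        refine Finset.sum_congr rfl fun l _ => by ring
    _ = ∑ m ∈ range n, P.coeff m * (m.factorial : ℚ) * coeff (R := ℚ) (m + 1) (F * Ga - Ga) := by
        refine Finset.sum_congr rfl fun m _ => by ring

lemma fact2 (n : ℕ) (hn : 2 ≤ n) : coeff (R := ℚ) n (E ^ 2 * W⁻¹ ^ (n + 1)) = 0 := by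
  obtain ⟨r, rfl⟩ : ∃ r, n = r + 2 := ⟨n - 2, by omega⟩
  have hw0 : constantCoeff (R := ℚ) W ≠ 0 := constCoeff_W'
  have hE2 : E ^ 2 * W⁻¹ ^ (r + 2 + 1)
      = (W + X * d⁄dX ℚ W) * W⁻¹ ^ (r + 2 + 1)
        - X * ((W + X * d⁄dX ℚ W) * (W * W⁻¹ ^ (r + 2 + 1))) := by
    rw [pow_two]
    nth_rewrite 1 [← W_add_X_dW]
    nth_rewrite 1 [show E = 1 - X * W by rw [X_mul_W]; ring]
    ring
  have hWW : W * W⁻¹ ^ (r + 2 + 1) = W⁻¹ ^ (r + 2) := by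
    rw [pow_succ']
    rw [← mul_assoc, W_inv, one_mul]
  rw [hE2, hWW, map_sub]
  have h1 : coeff (R := ℚ) (r + 2) ((W + X * d⁄dX ℚ W) * W⁻¹ ^ (r + 2 + 1)) = 0 := by
    have := res_core W hw0 (r + 1)
    convert this using 3
  have h2 : coeff (R := ℚ) (r + 2) (X * ((W + X * d⁄dX ℚ W) * W⁻¹ ^ (r + 2))) = 0 := by
    rw [show r + 2 = (r + 1) + 1 by omega, coeff_succ_X_mul]
    exact res_core W hw0 r
  rw [h1, h2, sub_zero]

lemma natDegree_Phi (n : ℕ) : (Phi n).natDegree = n - 1 := by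
  rw [Phi, Polynomial.natDegree_prod_of_monic _ _ (fun i _ => Polynomial.monic_X_add_C _)]
  have : ∀ i ∈ Finset.range (n - 1), (Polynomial.X + Polynomial.C (i : ℚ)).natDegree = 1 :=
    fun i _ => Polynomial.natDegree_X_add_C _
  rw [Finset.sum_congr rfl this, Finset.sum_const, smul_eq_mul, mul_one, Finset.card_range]

end HabelAux

open HabelAux Finset in
/-- Habel's conjectured formula: for every even `n ≥ 2`,
`(2/n!)·B_n^{(n)}(n/2) = −(2/(n−1)!)·Σ_{l=0}^{n−1} (B_{l+1}(n/2−1)/(l+1)!)·Φ^{(l)}(1−n/2)`,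
where `B_k^{(n)}(x) = k!·[t^k]((t/(e^t−1))^n · e^{xt})` is the generalized
Bernoulli polynomial, `B_m` the ordinary Bernoulli polynomials, and
`Φ(x) = ∏_{i=0}^{n−2}(x+i)`. -/
theorem genBernoulli_eq_habel
    (B : PowerSeries ℚ)
    (hB : B * (PowerSeries.exp ℚ - 1) = PowerSeries.X) :
    ∀ n : ℕ, Even n → 2 ≤ n →
      (2 / (Nat.factorial n : ℚ)) *
          ((Nat.factorial n : ℚ) *
            PowerSeries.coeff (R := ℚ) n
              (B ^ n * PowerSeries.rescale ((n : ℚ) / 2) (PowerSeries.exp ℚ)))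
        = -(2 / (Nat.factorial (n - 1) : ℚ)) *
            ∑ l ∈ Finset.range n,
              (Polynomial.eval ((n : ℚ) / 2 - 1) (Polynomial.bernoulli (l + 1))
                  / (Nat.factorial (l + 1) : ℚ)) *
                Polynomial.eval (1 - (n : ℚ) / 2)
                  ((fun p => Polynomial.derivative p)^[l] (Phi n)) := by
  intro n hne hn2
  obtain ⟨h, hh⟩ := hne
  have hnh : n = 2 * h := by omega
  have hh1 : 1 ≤ h := by omega
  set y : ℚ := (n : ℚ) / 2 - 1 with hy
  set a : ℚ := 1 - (n : ℚ) / 2 with ha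
  have hx : (n : ℚ) / 2 = (h : ℚ) := by rw [hnh]; push_cast; ring
  have hya : y + a = 0 := by rw [hy, ha]; ring
  have hah : a = -(((h - 1 : ℕ)) : ℚ) := by
    rw [ha, hx, Nat.cast_sub hh1]
    push_cast
    ring
  -- identify B
  have hBE : B = E * W⁻¹ := B_eq B hB
  -- LHS power series
  have hLHSser : B ^ n * rescale ((n : ℚ) / 2) (exp ℚ) = E ^ h * W⁻¹ ^ n := by
    rw [hBE, mul_pow, hx]
    have hEn : E ^ n * rescale ((h : ℚ)) (exp ℚ) = E ^ h := by
      rw [E_pow n, exp_mul_exp_eq_exp_add, E_pow h]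
      congr 1
      rw [hnh]
      push_cast
      ring
    calc (E ^ n * W⁻¹ ^ n) * rescale ((h : ℚ)) (exp ℚ)
        = (E ^ n * rescale ((h : ℚ)) (exp ℚ)) * W⁻¹ ^ n := by ring
      _ = E ^ h * W⁻¹ ^ n := by rw [hEn]
  -- step 1 : Bernoulli values are coefficients of F
  set F : ℚ⟦X⟧ := E * W⁻¹ * rescale y (exp ℚ) with hF
  have hstep1 : ∀ l : ℕ,
      Polynomial.eval y (Polynomial.bernoulli (l + 1)) / ((l + 1).factorial : ℚ)
        = coeff (R := ℚ) (l + 1) F := by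
    intro l
    have := congrArg (coeff (R := ℚ) (l + 1)) (bern_mk y)
    rw [coeff_mk] at this
    exact this
  set Ga : ℚ⟦X⟧ := rescale a (exp ℚ) with hGa
  have hGaE : Ga = E ^ (h - 1) := by
    rw [hGa, E_pow (h - 1), hah]
  have hFGa : F * Ga = E * W⁻¹ := by
    rw [hF, hGa]
    calc E * W⁻¹ * rescale y (exp ℚ) * rescale a (exp ℚ)
        = E * W⁻¹ * (rescale y (exp ℚ) * rescale a (exp ℚ)) := by ring
      _ = E * W⁻¹ * rescale (y + a) (exp ℚ) := by rw [exp_mul_exp_eq_exp_add]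
      _ = E * W⁻¹ := by rw [hya, rescale_exp_zero, mul_one]
  have hF0 : coeff (R := ℚ) 0 F = 1 := by
    rw [coeff_zero_eq_constantCoeff, hF, map_mul, map_mul]
    have h1 : constantCoeff (R := ℚ) E = 1 := by
      have := coeff_E 0
      rw [coeff_zero_eq_constantCoeff] at this
      simpa using this
    have h2 : constantCoeff (R := ℚ) (rescale y (exp ℚ)) = 1 := by
      have := coeff_rescale_exp y 0
      rw [coeff_zero_eq_constantCoeff] at this
      simpa using this
    rw [h1, h2, constCoeff_Winv]
    norm_num
  -- step 2
  have hdeg : (Phi n).natDegree < n := by rw [natDegree_Phi]; omega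
  have hstep2 := step2 n (Phi n) hdeg F Ga hF0 a hGa
  -- step 3
  set D : ℚ⟦X⟧ := F * Ga - Ga with hD
  have hDE : D = E * W⁻¹ - E ^ (h - 1) := by rw [hD, hFGa, hGaE]
  have hD0 : coeff (R := ℚ) 0 D = 0 := by
    rw [hDE, map_sub]
    simp only [coeff_zero_eq_constantCoeff, map_mul, map_pow]
    have h1 : constantCoeff (R := ℚ) E = 1 := by
      have := coeff_E 0
      rw [coeff_zero_eq_constantCoeff] at this
      simpa using this
    rw [h1, constCoeff_Winv, one_pow, mul_one, sub_self]
  have hsum3 : ∑ m ∈ range n, (Phi n).coeff m * (m.factorial : ℚ) * coeff (R := ℚ) (m + 1) D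
      = ((n - 1).factorial : ℚ) * coeff (R := ℚ) n (E * W⁻¹ ^ n * D) := by
    have hconv : coeff (R := ℚ) n (E * W⁻¹ ^ n * D)
        = ∑ i ∈ range (n + 1), coeff (R := ℚ) i (E * W⁻¹ ^ n) * coeff (R := ℚ) (n - i) D := by
      rw [PowerSeries.coeff_mul, Finset.Nat.sum_antidiagonal_eq_sum_range_succ_mk]
    calc ∑ m ∈ range n, (Phi n).coeff m * (m.factorial : ℚ) * coeff (R := ℚ) (m + 1) D
        = ∑ m ∈ range n, ((n - 1).factorial : ℚ) *
            (coeff (R := ℚ) (n - 1 - m) (E * W⁻¹ ^ n) * coeff (R := ℚ) (n - (n - 1 - m)) D) := by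
          refine Finset.sum_congr rfl fun m hm => ?_
          have hmn : m < n := mem_range.mp hm
          rw [show n - (n - 1 - m) = m + 1 by omega]
          linear_combination (coeff (R := ℚ) (m + 1) D) * (fact1 n hn2 ⟨h, hh⟩ m hmn)
      _ = ((n - 1).factorial : ℚ) * ∑ m ∈ range n,
            coeff (R := ℚ) (n - 1 - m) (E * W⁻¹ ^ n) * coeff (R := ℚ) (n - (n - 1 - m)) D := by
          rw [Finset.mul_sum]
      _ = ((n - 1).factorial : ℚ) * ∑ i ∈ range n,
            coeff (R := ℚ) i (E * W⁻¹ ^ n) * coeff (R := ℚ) (n - i) D := by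
          congr 1
          exact Finset.sum_range_reflect (fun i => coeff (R := ℚ) i (E * W⁻¹ ^ n) * coeff (R := ℚ) (n - i) D) n
      _ = ((n - 1).factorial : ℚ) * coeff (R := ℚ) n (E * W⁻¹ ^ n * D) := by
          rw [hconv, Finset.sum_range_succ, Nat.sub_self, hD0, mul_zero, add_zero]
  have hAD : E * W⁻¹ ^ n * D = E ^ 2 * W⁻¹ ^ (n + 1) - E ^ h * W⁻¹ ^ n := by
    rw [hDE]
    have hEh : E * E ^ (h - 1) = E ^ h := by
      rw [← pow_succ']
      congr 1
      omega
    calc E * W⁻¹ ^ n * (E * W⁻¹ - E ^ (h - 1))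
        = E ^ 2 * W⁻¹ ^ (n + 1) - (E * E ^ (h - 1)) * W⁻¹ ^ n := by ring
      _ = E ^ 2 * W⁻¹ ^ (n + 1) - E ^ h * W⁻¹ ^ n := by rw [hEh]
  have hcoeffAD : coeff (R := ℚ) n (E * W⁻¹ ^ n * D) = -coeff (R := ℚ) n (E ^ h * W⁻¹ ^ n) := by
    rw [hAD, map_sub, fact2 n hn2, zero_sub]
  -- put everything together
  have hiter : ∀ l : ℕ, ((fun p => Polynomial.derivative p)^[l] (Phi n))
      = (Polynomial.derivative^[l] (Phi n)) := fun l => rfl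
  have hRHSsum : ∑ l ∈ Finset.range n,
      (Polynomial.eval y (Polynomial.bernoulli (l + 1)) / ((l + 1).factorial : ℚ)) *
        Polynomial.eval a ((fun p => Polynomial.derivative p)^[l] (Phi n))
      = -(((n - 1).factorial : ℚ) * coeff (R := ℚ) n (E ^ h * W⁻¹ ^ n)) := by
    calc ∑ l ∈ Finset.range n,
        (Polynomial.eval y (Polynomial.bernoulli (l + 1)) / ((l + 1).factorial : ℚ)) *
          Polynomial.eval a ((fun p => Polynomial.derivative p)^[l] (Phi n))
        = ∑ l ∈ range n, coeff (R := ℚ) (l + 1) F *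
            Polynomial.eval a (Polynomial.derivative^[l] (Phi n)) := by
          refine Finset.sum_congr rfl fun l _ => ?_
          rw [hiter l, hstep1 l]
      _ = ∑ m ∈ range n, (Phi n).coeff m * (m.factorial : ℚ) * coeff (R := ℚ) (m + 1) D := hstep2
      _ = ((n - 1).factorial : ℚ) * coeff (R := ℚ) n (E * W⁻¹ ^ n * D) := hsum3
      _ = -(((n - 1).factorial : ℚ) * coeff (R := ℚ) n (E ^ h * W⁻¹ ^ n)) := by
          rw [hcoeffAD]; ring
  rw [hLHSser, hRHSsum]
  have hfn : ((n.factorial : ℚ)) ≠ 0 := Nat.cast_ne_zero.mpr n.factorial_ne_zero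
  have hfn1 : (((n - 1).factorial : ℚ)) ≠ 0 := Nat.cast_ne_zero.mpr (n - 1).factorial_ne_zero
  field_simp
end
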